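/- Let K ⊂ ℝ³ be a centrally symmetric convex body which is strongly convex with smooth boundary (K ∈ 𝒦̂). Then there exists a unique Θ(K) ∈ (0, π) such that ∫₀^{Θ(K)} ∫₀^π ρ_K(P(α,β))³ sin α dα dβ = ∫_{Θ(K)}^{π} ∫₀^π ρ_K(P(α,β))³ sin α dα dβ. Moreover, the function (θ, φ, ψ) ↦ Θ(X(θ)Y(φ)Z(ψ)K) is C^∞ on ℝ³. -/

import Mathlib

set_option maxHeartbeats 1000000


open MeasureTheory Real Set
open scoped RealInnerProductSpace

noncomputable section

/-- Euclidean 3-space. -/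
abbrev E3 := EuclideanSpace ℝ (Fin 3)

/-- The point `(a, b, c)` of `ℝ³`. -/
def pt (a b c : ℝ) : E3 := (WithLp.equiv 2 (Fin 3 → ℝ)).symm ![a, b, c]

/-- The polar body `K° = {y : ⟪x, y⟫ ≤ 1 for all x ∈ K}`. -/
def polarBody (K : Set E3) : Set E3 := {y : E3 | ∀ x ∈ K, ⟪x, y⟫ ≤ 1}

/-- The radial function `ρ_K(x) = max {t ≥ 0 : t • x ∈ K}`. -/
def radial (K : Set E3) (x : E3) : ℝ := sSup {t : ℝ | 0 ≤ t ∧ t • x ∈ K}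

/-- The spherical parametrization `P(α, β)`. -/
def sphP (α β : ℝ) : E3 := pt (cos α) (sin α * cos β) (sin α * sin β)

/-- Rotation by angle `θ` about the `x`-axis. -/
def rotX (θ : ℝ) (p : E3) : E3 :=
  pt (p 0) (cos θ * p 1 - sin θ * p 2) (sin θ * p 1 + cos θ * p 2)

/-- Rotation by angle `φ` about the `y`-axis. -/
def rotY (φ : ℝ) (p : E3) : E3 :=
  pt (cos φ * p 0 + sin φ * p 2) (p 1) (-sin φ * p 0 + cos φ * p 2)

/-- Rotation by angle `ψ` about the `z`-axis. -/
def rotZ (ψ : ℝ) (p : E3) : E3 :=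
  pt (cos ψ * p 0 - sin ψ * p 1) (sin ψ * p 0 + cos ψ * p 1) (p 2)

/-- `K ∈ 𝒦̂`: a centrally symmetric convex body in `ℝ³` which is strongly convex with
smooth boundary, i.e. `h_K = gauge²/2` is `C^∞` away from the origin and has positive
definite Hessian at every point of the unit sphere. -/
def IsKhat (K : Set E3) : Prop :=
  IsCompact K ∧ Convex ℝ K ∧ (interior K).Nonempty ∧ K = -K ∧
    ContDiffOn ℝ (⊤ : ℕ∞) (fun x => gauge K x ^ 2 / 2) {0}ᶜ ∧
    ∀ x : E3, ‖x‖ = 1 → ∀ v : E3, v ≠ 0 →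
      0 < fderiv ℝ (fderiv ℝ (fun y => gauge K y ^ 2 / 2)) x v v

/-- `Θ` satisfies the defining property of `Θ(K)`. -/
def ThetaEq (K : Set E3) (Θ : ℝ) : Prop :=
  Θ ∈ Ioo 0 π ∧
    ∫ β in (0:ℝ)..Θ, ∫ α in (0:ℝ)..π, radial K (sphP α β) ^ 3 * sin α
      = ∫ β in Θ..π, ∫ α in (0:ℝ)..π, radial K (sphP α β) ^ 3 * sin α

/-- `Φ` satisfies the defining property of `Φ(K)`. -/
def PhiEq (K : Set E3) (Φ : ℝ) : Prop :=
  Φ ∈ Ioo 0 π ∧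
    ∫ α in (0:ℝ)..Φ, radial K (sphP α 0) ^ 2 = ∫ α in Φ..π, radial K (sphP α 0) ^ 2

/-- `Ψ` satisfies the defining property of `Ψ(K)`, where `Θ = Θ(K)`. -/
def PsiEq (K : Set E3) (Θ Ψ : ℝ) : Prop :=
  Ψ ∈ Ioo 0 π ∧
    ∫ α in (0:ℝ)..Ψ, radial K (sphP α Θ) ^ 2 = ∫ α in Ψ..π, radial K (sphP α Θ) ^ 2

/-- The unitriangular map whose inverse is the matrix `𝒜(K)` (for `Θ = Θ(K)`, `Φ = Φ(K)`,
`Ψ = Ψ(K)`); thus the body `𝒜(K) K` is the preimage `shear Θ Φ Ψ ⁻¹' K`. -/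
def shear (Θ Φ Ψ : ℝ) (p : E3) : E3 :=
  pt (p 0 + p 1 / tan Φ + p 2 / (sin Θ * tan Ψ)) (p 1 + p 2 / tan Θ) (p 2)

/-- `v₁ = vol(L ∩ {x ≥ 0, y ≥ 0, z ≥ 0})`. -/
def vol₁ (L : Set E3) : ℝ := (volume (L ∩ {p : E3 | 0 ≤ p 0 ∧ 0 ≤ p 1 ∧ 0 ≤ p 2})).toReal

/-- `v₂ = vol(L ∩ {x ≤ 0, y ≥ 0, z ≥ 0})`. -/
def vol₂ (L : Set E3) : ℝ := (volume (L ∩ {p : E3 | p 0 ≤ 0 ∧ 0 ≤ p 1 ∧ 0 ≤ p 2})).toReal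

/-- `v₃ = vol(L ∩ {x ≤ 0, y ≤ 0, z ≥ 0})`. -/
def vol₃ (L : Set E3) : ℝ := (volume (L ∩ {p : E3 | p 0 ≤ 0 ∧ p 1 ≤ 0 ∧ 0 ≤ p 2})).toReal

/-- `v₄ = vol(L ∩ {x ≥ 0, y ≤ 0, z ≥ 0})`. -/
def vol₄ (L : Set E3) : ℝ := (volume (L ∩ {p : E3 | 0 ≤ p 0 ∧ p 1 ≤ 0 ∧ 0 ≤ p 2})).toReal

/-- `F` applied to the transformed body `L' = 𝒜(K) K`. -/
def Ffun (L : Set E3) : ℝ :=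
  (μH[2] (L ∩ {p : E3 | p 0 = 0 ∧ 0 ≤ p 1 ∧ 0 ≤ p 2})).toReal -
    (μH[2] (L ∩ {p : E3 | p 0 = 0 ∧ p 1 ≤ 0 ∧ 0 ≤ p 2})).toReal

/-- `G = v₁ + v₃ - v₂ - v₄` applied to the transformed body `L' = 𝒜(K) K`. -/
def Gfun (L : Set E3) : ℝ := vol₁ L + vol₃ L - vol₂ L - vol₄ L

/-- `H = v₁ + v₄ - v₂ - v₃` applied to the transformed body `L' = 𝒜(K) K`. -/
def Hfun (L : Set E3) : ℝ := vol₁ L + vol₄ L - vol₂ L - vol₃ L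

/-- Condition (★). -/
def StarCond (K : Set E3) : Prop :=
  volume (K ∩ {p : E3 | 0 ≤ p 0 ∧ 0 ≤ p 1 ∧ 0 ≤ p 2})
      = volume (K ∩ {p : E3 | p 0 ≤ 0 ∧ 0 ≤ p 1 ∧ 0 ≤ p 2}) ∧
    volume (K ∩ {p : E3 | p 0 ≤ 0 ∧ 0 ≤ p 1 ∧ 0 ≤ p 2})
      = volume (K ∩ {p : E3 | p 0 ≤ 0 ∧ p 1 ≤ 0 ∧ 0 ≤ p 2}) ∧
    volume (K ∩ {p : E3 | p 0 ≤ 0 ∧ p 1 ≤ 0 ∧ 0 ≤ p 2})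
      = volume (K ∩ {p : E3 | 0 ≤ p 0 ∧ p 1 ≤ 0 ∧ 0 ≤ p 2}) ∧
    μH[2] (K ∩ {p : E3 | p 0 = 0 ∧ 0 ≤ p 1 ∧ 0 ≤ p 2})
      = μH[2] (K ∩ {p : E3 | p 0 = 0 ∧ p 1 ≤ 0 ∧ 0 ≤ p 2}) ∧
    μH[2] (K ∩ {p : E3 | p 1 = 0 ∧ 0 ≤ p 0 ∧ 0 ≤ p 2})
      = μH[2] (K ∩ {p : E3 | p 1 = 0 ∧ 0 ≤ p 0 ∧ p 2 ≤ 0}) ∧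
    μH[2] (K ∩ {p : E3 | p 2 = 0 ∧ 0 ≤ p 0 ∧ 0 ≤ p 1})
      = μH[2] (K ∩ {p : E3 | p 2 = 0 ∧ p 0 ≤ 0 ∧ 0 ≤ p 1})

/-- The cube `[-1,1]³`. -/
def cube : Set E3 := {x : E3 | ∀ i, x i ∈ Icc (-1:ℝ) 1}

/-- The cross product on `ℝ³`. -/
def cross (a b : E3) : E3 :=
  pt (a 1 * b 2 - a 2 * b 1) (a 2 * b 0 - a 0 * b 2) (a 0 * b 1 - a 1 * b 0)

-- ==== auxiliary development ====
section Aux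

lemma pt_apply0 (a b c : ℝ) : pt a b c 0 = a := rfl
lemma pt_apply1 (a b c : ℝ) : pt a b c 1 = b := rfl
lemma pt_apply2 (a b c : ℝ) : pt a b c 2 = c := rfl

lemma pt_eta (p : E3) : pt (p 0) (p 1) (p 2) = p := by
  ext i; fin_cases i <;> rfl

lemma smul_apply' (t : ℝ) (p : E3) (i : Fin 3) : (t • p) i = t * p i := rfl

end Aux
section KBasics
variable {K : Set E3}

lemma khat_zero_mem_interior (hK : IsKhat K) : (0 : E3) ∈ interior K := by
  obtain ⟨hc, hv, ⟨x, hx⟩, hs, -, -⟩ := hK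
  have hneg : interior (-K) = -interior K := by
    have h1 : -K = (Homeomorph.neg E3) '' K := by
      ext y; simp [Set.mem_neg, Homeomorph.neg, Set.mem_image]
    have h2 : -interior K = (Homeomorph.neg E3) '' interior K := by
      ext y; simp [Set.mem_neg, Homeomorph.neg, Set.mem_image]
    rw [h1, h2, ((Homeomorph.neg E3).image_interior K)]
  have hx' : -x ∈ interior K := by
    have h3 : x ∈ interior (-K) := by rwa [← hs]
    rw [hneg] at h3
    simpa [Set.mem_neg] using h3
  have := hv.interior hx hx' (by norm_num : (0:ℝ) ≤ 1/2) (by norm_num : (0:ℝ) ≤ 1/2)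
    (by norm_num)
  simpa using this

lemma khat_K_nhds (hK : IsKhat K) : K ∈ nhds (0 : E3) :=
  mem_interior_iff_mem_nhds.1 (khat_zero_mem_interior hK)

lemma khat_gauge_pos (hK : IsKhat K) {x : E3} (hx : x ≠ 0) : 0 < gauge K x :=
  (gauge_pos (absorbent_nhds_zero (khat_K_nhds hK))
    ((NormedSpace.isVonNBounded_iff ℝ).2 hK.1.isBounded)).2 hx

lemma khat_mem_iff (hK : IsKhat K) {x : E3} : x ∈ K ↔ gauge K x ≤ 1 := by
  rw [gauge_le_one_iff_mem_closure hK.2.1 (khat_K_nhds hK), hK.1.isClosed.closure_eq]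

lemma khat_radial_eq (hK : IsKhat K) {x : E3} (hx : x ≠ 0) :
    radial K x = (gauge K x)⁻¹ := by
  have hg := khat_gauge_pos hK hx
  have hset : {t : ℝ | 0 ≤ t ∧ t • x ∈ K} = Icc 0 (gauge K x)⁻¹ := by
    ext t
    simp only [mem_setOf_eq, mem_Icc]
    constructor
    · rintro ⟨ht, htK⟩
      refine ⟨ht, ?_⟩
      have := (khat_mem_iff hK).1 htK
      rw [gauge_smul_of_nonneg ht, smul_eq_mul] at this
      rw [inv_eq_one_div, le_div_iff₀ hg]
      linarith
    · rintro ⟨ht, ht2⟩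
      refine ⟨ht, (khat_mem_iff hK).2 ?_⟩
      rw [gauge_smul_of_nonneg ht, smul_eq_mul]
      rw [inv_eq_one_div, le_div_iff₀ hg] at ht2
      linarith
  rw [radial, hset, csSup_Icc (by positivity)]

lemma khat_radC (hK : IsKhat K) {x : E3} (hx : x ≠ 0) :
    ContDiffAt ℝ (⊤ : ℕ∞) (fun y => (gauge K y)⁻¹) x := by
  have hopen : ({0}ᶜ : Set E3) ∈ nhds x := (isOpen_compl_singleton).mem_nhds hx
  have hh : ContDiffAt ℝ (⊤ : ℕ∞) (fun y => gauge K y ^ 2 / 2) x :=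
    (hK.2.2.2.2.1).contDiffAt hopen
  have hsq : ContDiffAt ℝ (⊤ : ℕ∞) (fun y => Real.sqrt (2 * (gauge K y ^ 2 / 2))) x := by
    refine (Real.contDiffAt_sqrt ?_).comp x (contDiffAt_const.mul hh)
    have := khat_gauge_pos hK hx
    positivity
  have heq : (fun y => Real.sqrt (2 * (gauge K y ^ 2 / 2))) = fun y => gauge K y := by
    funext y
    rw [show 2 * (gauge K y ^ 2 / 2) = gauge K y ^ 2 by ring,
      Real.sqrt_sq (gauge_nonneg _)]
  rw [heq] at hsq
  exact hsq.inv (ne_of_gt (khat_gauge_pos hK hx))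

end KBasics
section Smooth3

variable {G : Type} [NormedAddCommGroup G] [NormedSpace ℝ G]

lemma contDiff_coord (i : Fin 3) : ContDiff ℝ (⊤ : ℕ∞) (fun p : E3 => p i) := by
  have h := (PiLp.continuousLinearEquiv 2 ℝ (fun _ : Fin 3 => ℝ)).contDiff
    (n := (⊤ : ℕ∞))
  exact (contDiff_pi.1 h) i

lemma ContDiff.pt3 {f g h : G → ℝ} (hf : ContDiff ℝ (⊤ : ℕ∞) f)
    (hg : ContDiff ℝ (⊤ : ℕ∞) g) (hh : ContDiff ℝ (⊤ : ℕ∞) h) :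
    ContDiff ℝ (⊤ : ℕ∞) (fun x => pt (f x) (g x) (h x)) := by
  have hv : ContDiff ℝ (⊤ : ℕ∞) (fun x => ![f x, g x, h x] : G → (Fin 3 → ℝ)) := by
    refine contDiff_pi.2 fun i => ?_
    fin_cases i <;> simpa
  exact ((PiLp.continuousLinearEquiv 2 ℝ (fun _ : Fin 3 => ℝ)).symm.contDiff).comp hv

lemma contDiff_rotX {t : G → ℝ} {v : G → E3} (ht : ContDiff ℝ (⊤ : ℕ∞) t)
    (hv : ContDiff ℝ (⊤ : ℕ∞) v) :
    ContDiff ℝ (⊤ : ℕ∞) (fun x => rotX (t x) (v x)) := by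
  have h0 := (contDiff_coord 0).comp hv
  have h1 := (contDiff_coord 1).comp hv
  have h2 := (contDiff_coord 2).comp hv
  have hc := Real.contDiff_cos.comp ht
  have hs := Real.contDiff_sin.comp ht
  exact ContDiff.pt3 h0 ((hc.mul h1).sub (hs.mul h2)) ((hs.mul h1).add (hc.mul h2))

lemma contDiff_rotY {t : G → ℝ} {v : G → E3} (ht : ContDiff ℝ (⊤ : ℕ∞) t)
    (hv : ContDiff ℝ (⊤ : ℕ∞) v) :
    ContDiff ℝ (⊤ : ℕ∞) (fun x => rotY (t x) (v x)) := by
  have h0 := (contDiff_coord 0).comp hv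
  have h1 := (contDiff_coord 1).comp hv
  have h2 := (contDiff_coord 2).comp hv
  have hc := Real.contDiff_cos.comp ht
  have hs := Real.contDiff_sin.comp ht
  exact ContDiff.pt3 ((hc.mul h0).add (hs.mul h2)) h1 (((hs.neg).mul h0).add (hc.mul h2))

lemma contDiff_rotZ {t : G → ℝ} {v : G → E3} (ht : ContDiff ℝ (⊤ : ℕ∞) t)
    (hv : ContDiff ℝ (⊤ : ℕ∞) v) :
    ContDiff ℝ (⊤ : ℕ∞) (fun x => rotZ (t x) (v x)) := by
  have h0 := (contDiff_coord 0).comp hv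
  have h1 := (contDiff_coord 1).comp hv
  have h2 := (contDiff_coord 2).comp hv
  have hc := Real.contDiff_cos.comp ht
  have hs := Real.contDiff_sin.comp ht
  exact ContDiff.pt3 ((hc.mul h0).sub (hs.mul h1)) ((hs.mul h0).add (hc.mul h1)) h2

lemma contDiff_sphP {t s : G → ℝ} (ht : ContDiff ℝ (⊤ : ℕ∞) t)
    (hs : ContDiff ℝ (⊤ : ℕ∞) s) :
    ContDiff ℝ (⊤ : ℕ∞) (fun x => sphP (t x) (s x)) := by
  have hct := Real.contDiff_cos.comp ht
  have hst := Real.contDiff_sin.comp ht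
  have hcs := Real.contDiff_cos.comp hs
  have hss := Real.contDiff_sin.comp hs
  exact ContDiff.pt3 hct (hst.mul hcs) (hst.mul hss)

end Smooth3

section RotAlg

/-- squared norm helper -/
def nsq (p : E3) : ℝ := p 0 ^ 2 + p 1 ^ 2 + p 2 ^ 2

lemma nsq_rotX (θ : ℝ) (p : E3) : nsq (rotX θ p) = nsq p := by
  simp only [nsq, rotX, pt_apply0, pt_apply1, pt_apply2]
  linear_combination (p 1 ^ 2 + p 2 ^ 2) * (Real.sin_sq_add_cos_sq θ)

lemma nsq_rotY (θ : ℝ) (p : E3) : nsq (rotY θ p) = nsq p := by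
  simp only [nsq, rotY, pt_apply0, pt_apply1, pt_apply2]
  linear_combination (p 0 ^ 2 + p 2 ^ 2) * (Real.sin_sq_add_cos_sq θ)

lemma nsq_rotZ (θ : ℝ) (p : E3) : nsq (rotZ θ p) = nsq p := by
  simp only [nsq, rotZ, pt_apply0, pt_apply1, pt_apply2]
  linear_combination (p 0 ^ 2 + p 1 ^ 2) * (Real.sin_sq_add_cos_sq θ)

lemma nsq_sphP (α β : ℝ) : nsq (sphP α β) = 1 := by
  simp only [nsq, sphP, pt_apply0, pt_apply1, pt_apply2]
  have h1 := Real.sin_sq_add_cos_sq α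
  have h2 := Real.sin_sq_add_cos_sq β
  nlinarith [h1, h2]

lemma ne_zero_of_nsq_one {p : E3} (h : nsq p = 1) : p ≠ 0 := by
  intro h0
  rw [h0] at h
  simp [nsq] at h

lemma rotX_rotX_neg (θ : ℝ) (p : E3) : rotX θ (rotX (-θ) p) = p := by
  have h := Real.sin_sq_add_cos_sq θ
  ext i
  fin_cases i <;>
    simp [rotX, pt, WithLp.equiv_symm_apply, PiLp.toLp_apply, Real.cos_neg, Real.sin_neg] <;>
    first
      | rfl
      | linear_combination (p 0) * h
      | linear_combination (p 1) * h
      | linear_combination (p 2) * h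

lemma rotX_neg_rotX (θ : ℝ) (p : E3) : rotX (-θ) (rotX θ p) = p := by
  have := rotX_rotX_neg (-θ) p
  simpa using this

lemma rotY_rotY_neg (θ : ℝ) (p : E3) : rotY θ (rotY (-θ) p) = p := by
  have h := Real.sin_sq_add_cos_sq θ
  ext i
  fin_cases i <;>
    simp [rotY, pt, WithLp.equiv_symm_apply, PiLp.toLp_apply, Real.cos_neg, Real.sin_neg] <;>
    first
      | rfl
      | linear_combination (p 0) * h
      | linear_combination (p 1) * h
      | linear_combination (p 2) * h

lemma rotY_neg_rotY (θ : ℝ) (p : E3) : rotY (-θ) (rotY θ p) = p := by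
  have := rotY_rotY_neg (-θ) p
  simpa using this

lemma rotZ_rotZ_neg (θ : ℝ) (p : E3) : rotZ θ (rotZ (-θ) p) = p := by
  have h := Real.sin_sq_add_cos_sq θ
  ext i
  fin_cases i <;>
    simp [rotZ, pt, WithLp.equiv_symm_apply, PiLp.toLp_apply, Real.cos_neg, Real.sin_neg] <;>
    first
      | rfl
      | linear_combination (p 0) * h
      | linear_combination (p 1) * h
      | linear_combination (p 2) * h

lemma rotZ_neg_rotZ (θ : ℝ) (p : E3) : rotZ (-θ) (rotZ θ p) = p := by
  have := rotZ_rotZ_neg (-θ) p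
  simpa using this

lemma rotX_smul (θ : ℝ) (t : ℝ) (p : E3) : rotX θ (t • p) = t • rotX θ p := by
  ext i
  fin_cases i <;> simp [rotX, pt_apply0, pt_apply1, pt_apply2, smul_apply'] <;> ring

lemma rotY_smul (θ : ℝ) (t : ℝ) (p : E3) : rotY θ (t • p) = t • rotY θ p := by
  ext i
  fin_cases i <;> simp [rotY, pt_apply0, pt_apply1, pt_apply2, smul_apply'] <;> ring

lemma rotZ_smul (θ : ℝ) (t : ℝ) (p : E3) : rotZ θ (t • p) = t • rotZ θ p := by
  ext i
  fin_cases i <;> simp [rotZ, pt_apply0, pt_apply1, pt_apply2, smul_apply'] <;> ring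

lemma radial_image {A B : E3 → E3} (hAB : ∀ p, A (B p) = p) (hBA : ∀ p, B (A p) = p)
    (hBs : ∀ (t : ℝ) p, B (t • p) = t • B p) (K : Set E3) (x : E3) :
    radial (A '' K) x = radial K (B x) := by
  unfold radial
  congr 1
  ext t
  simp only [mem_setOf_eq, and_congr_right_iff]
  intro ht
  constructor
  · rintro ⟨y, hy, hyx⟩
    have : B (t • x) = y := by rw [← hyx, hBA]
    rw [hBs] at this
    rwa [← this] at hy
  · intro h
    exact ⟨t • B x, h, by rw [← hBs, hAB]⟩

end RotAlg

section ParamInt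
open intervalIntegral Metric Filter
universe u

set_option synthInstance.maxHeartbeats 1000000 in
private lemma paramIntegral_contDiff_aux (a b : ℝ) (n : ℕ) :
    ∀ {E : Type u} [NormedAddCommGroup E] [NormedSpace ℝ E] [FiniteDimensional ℝ E]
      {F : Type u} [NormedAddCommGroup F] [NormedSpace ℝ F] [CompleteSpace F]
      (f : E × ℝ → F), ContDiff ℝ (⊤ : ℕ∞) f →
      ContDiff ℝ (n : ℕ∞) (fun x : E => ∫ t in a..b, f (x, t)) := by
  induction n with
  | zero =>
    intro E _ _ _ F _ _ _ f hf
    exact contDiff_zero.2 (continuous_parametric_intervalIntegral_of_continuous'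
      (f := fun x t => f (x, t)) (μ := volume) hf.continuous a b)
  | succ n IH =>
    intro E _ _ _ F _ _ _ f hf
    set D1 : E × ℝ → (E →L[ℝ] F) := fun z => (fderiv ℝ f z).comp (.inl ℝ E ℝ) with hD1def
    have hfd : ContDiff ℝ (⊤ : ℕ∞) (fderiv ℝ f) := (contDiff_infty_iff_fderiv.mp hf).2
    have hD1 : ContDiff ℝ (⊤ : ℕ∞) D1 :=
      (((ContinuousLinearMap.compL ℝ E (E × ℝ) F).flip
        (ContinuousLinearMap.inl ℝ E ℝ)).contDiff.comp hfd : )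
    have hD1c : Continuous D1 := hD1.continuous
    have hpart : ∀ (x : E) (t : ℝ), HasFDerivAt (fun y => f (y, t)) (D1 (x, t)) x := by
      intro x t
      have h1 := (hf.differentiable (by simp) (x, t)).hasFDerivAt
      have h2 : HasFDerivAt (fun y : E => (y, t)) (ContinuousLinearMap.inl ℝ E ℝ) x := by
        have := ((ContinuousLinearMap.inl ℝ E ℝ).hasFDerivAt (x := x)).add_const ((0 : E), t)
        simpa using this
      exact h1.comp x h2
    have hderiv : ∀ x₀ : E, HasFDerivAt (fun x => ∫ t in a..b, f (x, t))
        (∫ t in a..b, D1 (x₀, t)) x₀ := by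
      intro x₀
      obtain ⟨C, hC⟩ :=
        ((isCompact_closedBall x₀ 1).prod isCompact_uIcc).exists_bound_of_continuousOn
        (hD1c.continuousOn (s := closedBall x₀ 1 ×ˢ uIcc a b))
      apply intervalIntegral.hasFDerivAt_integral_of_dominated_of_fderiv_le
        (F := fun x t => f (x, t)) (F' := fun x t => D1 (x, t))
        (bound := fun _ => C) (ball_mem_nhds x₀ one_pos)
      · exact Filter.Eventually.of_forall fun x =>
          (hf.continuous.comp (continuous_const.prodMk continuous_id)).aestronglyMeasurable
      · exact (hf.continuous.comp (continuous_const.prodMk continuous_id)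
          : Continuous fun t => f (x₀, t)).intervalIntegrable a b
      · exact (hD1c.comp (continuous_const.prodMk continuous_id)).aestronglyMeasurable
      · refine Filter.Eventually.of_forall fun t ht x hx => hC (x, t) ?_
        exact ⟨ball_subset_closedBall hx, uIoc_subset_uIcc ht⟩
      · exact intervalIntegrable_const
      · exact Filter.Eventually.of_forall fun t _ x _ => hpart x t
    have hdiff : Differentiable ℝ (fun x => ∫ t in a..b, f (x, t)) :=
      fun x => (hderiv x).differentiableAt
    have hfd_eq : fderiv ℝ (fun x => ∫ t in a..b, f (x, t))
        = fun x₀ => ∫ t in a..b, D1 (x₀, t) := funext fun x₀ => (hderiv x₀).fderiv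
    have key : ContDiff ℝ (((n : ℕ∞) : WithTop ℕ∞) + 1) (fun x => ∫ t in a..b, f (x, t)) := by
      refine contDiff_succ_iff_fderiv.2 ⟨hdiff, ?_, ?_⟩
      · intro h; exact (WithTop.coe_ne_top h).elim
      · rw [hfd_eq]; exact IH (fun z => D1 z) hD1
    have hcast : (((n + 1 : ℕ) : ℕ∞) : WithTop ℕ∞) = ((n : ℕ∞) : WithTop ℕ∞) + 1 := by
      push_cast; ring
    rw [hcast]; exact key

lemma paramIntegral_contDiff {E : Type u} [NormedAddCommGroup E] [NormedSpace ℝ E]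
    [FiniteDimensional ℝ E] {F : Type u} [NormedAddCommGroup F] [NormedSpace ℝ F]
    [CompleteSpace F] {f : E × ℝ → F} (hf : ContDiff ℝ (⊤ : ℕ∞) f) (a b : ℝ) :
    ContDiff ℝ (⊤ : ℕ∞) (fun x : E => ∫ t in a..b, f (x, t)) :=
  contDiff_infty.2 fun n => paramIntegral_contDiff_aux a b n f hf

end ParamInt

section Core
variable {K : Set E3}

/-- parameter space -/
abbrev P3 := ℝ × ℝ × ℝ

def Qm (x : P3) (β α : ℝ) : E3 :=
  rotZ (-x.2.2) (rotY (-x.2.1) (rotX (-x.1) (sphP α β)))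

lemma Qm_ne (x : P3) (β α : ℝ) : Qm x β α ≠ 0 := by
  apply ne_zero_of_nsq_one
  simp [Qm, nsq_rotZ, nsq_rotY, nsq_rotX, nsq_sphP]

lemma contDiff_Qm : ContDiff ℝ (⊤ : ℕ∞) (fun z : (P3 × ℝ) × ℝ => Qm z.1.1 z.1.2 z.2) := by
  have hθ : ContDiff ℝ (⊤ : ℕ∞) (fun z : (P3 × ℝ) × ℝ => z.1.1.1) := by fun_prop
  have hφ : ContDiff ℝ (⊤ : ℕ∞) (fun z : (P3 × ℝ) × ℝ => z.1.1.2.1) := by fun_prop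
  have hψ : ContDiff ℝ (⊤ : ℕ∞) (fun z : (P3 × ℝ) × ℝ => z.1.1.2.2) := by fun_prop
  have hβ : ContDiff ℝ (⊤ : ℕ∞) (fun z : (P3 × ℝ) × ℝ => z.1.2) := by fun_prop
  have hα : ContDiff ℝ (⊤ : ℕ∞) (fun z : (P3 × ℝ) × ℝ => z.2) := by fun_prop
  exact contDiff_rotZ hψ.neg (contDiff_rotY hφ.neg (contDiff_rotX hθ.neg
    (contDiff_sphP hα hβ)))

def gA (K : Set E3) (w : P3 × ℝ) : ℝ :=
  ∫ α in (0:ℝ)..π, (gauge K (Qm w.1 w.2 α))⁻¹ ^ 3 * Real.sin α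

lemma integrand_contDiff (hK : IsKhat K) :
    ContDiff ℝ (⊤ : ℕ∞) (fun z : (P3 × ℝ) × ℝ =>
      (gauge K (Qm z.1.1 z.1.2 z.2))⁻¹ ^ 3 * Real.sin z.2) := by
  rw [contDiff_iff_contDiffAt]
  intro z
  have h1 : ContDiffAt ℝ (⊤ : ℕ∞) (fun w : (P3 × ℝ) × ℝ => (gauge K (Qm w.1.1 w.1.2 w.2))⁻¹) z :=
    (khat_radC hK (Qm_ne z.1.1 z.1.2 z.2)).comp (g := fun y => (gauge K y)⁻¹) z contDiff_Qm.contDiffAt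
  exact (h1.pow 3).mul ((Real.contDiff_sin.comp contDiff_snd).contDiffAt)

set_option maxHeartbeats 1000000 in
lemma gA_contDiff (hK : IsKhat K) : ContDiff ℝ (⊤ : ℕ∞) (gA K) := by
  have := paramIntegral_contDiff (integrand_contDiff hK) 0 π
  exact this


lemma gA_pos (hK : IsKhat K) (w : P3 × ℝ) : 0 < gA K w := by
  have hc2 : Continuous (fun z : (P3 × ℝ) × ℝ =>
      (gauge K (Qm z.1.1 z.1.2 z.2))⁻¹ ^ 3 * Real.sin z.2) := (integrand_contDiff hK).continuous
  have hcont : Continuous fun α : ℝ => (gauge K (Qm w.1 w.2 α))⁻¹ ^ 3 * Real.sin α := by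
    have := hc2.comp (continuous_const.prodMk continuous_id (Y := ℝ) (f := fun α : ℝ => w))
    exact this
  apply intervalIntegral.intervalIntegral_pos_of_pos_on (hcont.intervalIntegrable 0 π)
  · intro α hα
    have h1 := khat_gauge_pos hK (Qm_ne w.1 w.2 α)
    have h2 := Real.sin_pos_of_pos_of_lt_pi hα.1 hα.2
    positivity
  · exact Real.pi_pos

def Ff (K : Set E3) (w : P3 × ℝ) : ℝ := w.2 * ∫ s in (0:ℝ)..1, gA K (w.1, w.2 * s)

lemma Ff_contDiff (hK : IsKhat K) : ContDiff ℝ (⊤ : ℕ∞) (Ff K) := by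
  have h1 : ContDiff ℝ (⊤ : ℕ∞) (fun z : (P3 × ℝ) × ℝ => gA K (z.1.1, z.1.2 * z.2)) := by
    apply (gA_contDiff hK).comp
    fun_prop
  have h2 := paramIntegral_contDiff h1 0 1
  exact contDiff_snd.mul h2

lemma Ff_eq (hK : IsKhat K) (x : P3) (Θ : ℝ) :
    Ff K (x, Θ) = ∫ β in (0:ℝ)..Θ, gA K (x, β) := by
  rcases eq_or_ne Θ 0 with h | h
  · simp [Ff, h]
  · have hc := intervalIntegral.integral_comp_mul_left (a := (0:ℝ)) (b := 1)
      (fun β => gA K (x, β)) h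
    simp only [mul_zero, mul_one, smul_eq_mul] at hc
    rw [Ff]
    simp only [hc]
    field_simp

lemma gA_cont_beta (hK : IsKhat K) (x : P3) : Continuous fun β => gA K (x, β) := by
  have := (gA_contDiff hK).continuous.comp
    (continuous_const.prodMk continuous_id (Y := ℝ) (f := fun β : ℝ => x))
  exact this

lemma Ff_hasDeriv (hK : IsKhat K) (x : P3) (Θ₀ : ℝ) :
    HasDerivAt (fun Θ => Ff K (x, Θ)) (gA K (x, Θ₀)) Θ₀ := by
  have hcont := gA_cont_beta hK x
  have h := intervalIntegral.integral_hasDerivAt_right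
    (hcont.intervalIntegrable 0 Θ₀)
    (hcont.stronglyMeasurable.stronglyMeasurableAtFilter)
    hcont.continuousAt
  have heq : (fun Θ => Ff K (x, Θ)) = fun Θ => ∫ β in (0:ℝ)..Θ, gA K (x, β) :=
    funext fun Θ => Ff_eq hK x Θ
  rw [heq]
  exact h

lemma Ff_strictMono (hK : IsKhat K) (x : P3) : StrictMono (fun Θ => Ff K (x, Θ)) := by
  apply strictMono_of_deriv_pos
  intro Θ
  rw [(Ff_hasDeriv hK x Θ).deriv]
  exact gA_pos hK (x, Θ)

lemma Ff_zero (hK : IsKhat K) (x : P3) : Ff K (x, 0) = 0 := by simp [Ff]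

lemma Ff_pi_pos (hK : IsKhat K) (x : P3) : 0 < Ff K (x, π) := by
  rw [Ff_eq hK x π]
  exact intervalIntegral.intervalIntegral_pos_of_pos_on
    ((gA_cont_beta hK x).intervalIntegrable 0 π)
    (fun β _ => gA_pos hK (x, β)) Real.pi_pos

def rotK (K : Set E3) (x : P3) : Set E3 :=
  rotX x.1 '' (rotY x.2.1 '' (rotZ x.2.2 '' K))

lemma radial_rotK (x : P3) (y : E3) :
    radial (rotK K x) y = radial K (rotZ (-x.2.2) (rotY (-x.2.1) (rotX (-x.1) y))) := by
  rw [rotK,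
    radial_image (rotX_rotX_neg x.1) (rotX_neg_rotX x.1) (rotX_smul (-x.1)),
    radial_image (rotY_rotY_neg x.2.1) (rotY_neg_rotY x.2.1) (rotY_smul (-x.2.1)),
    radial_image (rotZ_rotZ_neg x.2.2) (rotZ_neg_rotZ x.2.2) (rotZ_smul (-x.2.2))]

lemma inner_eq (hK : IsKhat K) (x : P3) (β : ℝ) :
    (∫ α in (0:ℝ)..π, radial (rotK K x) (sphP α β) ^ 3 * Real.sin α) = gA K (x, β) := by
  rw [gA]
  apply intervalIntegral.integral_congr
  intro α _
  show radial (rotK K x) (sphP α β) ^ 3 * Real.sin α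
      = (gauge K (Qm (x, β).1 (x, β).2 α))⁻¹ ^ 3 * Real.sin α
  rw [radial_rotK, show rotZ (-x.2.2) (rotY (-x.2.1) (rotX (-x.1) (sphP α β))) = Qm x β α
    from rfl, khat_radial_eq hK (Qm_ne x β α)]

lemma theta_iff (hK : IsKhat K) (x : P3) (Θ : ℝ) :
    ThetaEq (rotK K x) Θ ↔ Θ ∈ Ioo 0 π ∧ 2 * Ff K (x, Θ) = Ff K (x, π) := by
  unfold ThetaEq
  apply and_congr_right
  intro hΘ
  have h1 : (∫ β in (0:ℝ)..Θ, ∫ α in (0:ℝ)..π, radial (rotK K x) (sphP α β) ^ 3 * Real.sin α)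
      = Ff K (x, Θ) := by
    rw [Ff_eq hK]
    exact intervalIntegral.integral_congr fun β _ => inner_eq hK x β
  have h2 : (∫ β in Θ..π, ∫ α in (0:ℝ)..π, radial (rotK K x) (sphP α β) ^ 3 * Real.sin α)
      = Ff K (x, π) - Ff K (x, Θ) := by
    have h3 : (∫ β in Θ..π, ∫ α in (0:ℝ)..π, radial (rotK K x) (sphP α β) ^ 3 * Real.sin α)
        = ∫ β in Θ..π, gA K (x, β) :=
      intervalIntegral.integral_congr fun β _ => inner_eq hK x β
    have h4 := intervalIntegral.integral_add_adjacent_intervals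
      (a := (0:ℝ)) (b := Θ) (c := π) (f := fun β => gA K (x, β)) (μ := volume)
      ((gA_cont_beta hK x).intervalIntegrable 0 Θ)
      ((gA_cont_beta hK x).intervalIntegrable Θ π)
    rw [h3, Ff_eq hK, Ff_eq hK]
    linarith
  rw [h1, h2]
  constructor <;> intro h <;> linarith

lemma exists_unique_root (hK : IsKhat K) (x : P3) :
    ∃! Θ : ℝ, Θ ∈ Ioo 0 π ∧ 2 * Ff K (x, Θ) = Ff K (x, π) := by
  have hmono := Ff_strictMono hK x
  have hcont : Continuous (fun Θ => Ff K (x, Θ)) :=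
    (Ff_contDiff hK).continuous.comp (continuous_const.prodMk continuous_id)
  have h0 : Ff K (x, 0) = 0 := Ff_zero hK x
  have hpi := Ff_pi_pos hK x
  have hIVT := intermediate_value_Ioo (le_of_lt Real.pi_pos)
    (hcont.continuousOn : ContinuousOn (fun Θ => Ff K (x, Θ)) (Icc 0 π))
  have hmem : Ff K (x, π) / 2 ∈ Ioo (Ff K (x, 0)) (Ff K (x, π)) := by
    rw [h0]; constructor <;> [positivity; linarith]
  obtain ⟨Θ, hΘmem, hΘval⟩ := hIVT hmem
  have hΘval' : Ff K (x, Θ) = Ff K (x, π) / 2 := hΘval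
  refine ⟨Θ, ⟨hΘmem, by linarith⟩, ?_⟩
  rintro Θ' ⟨hΘ'mem, hΘ'val⟩
  apply hmono.injective
  show Ff K (x, Θ') = Ff K (x, Θ)
  linarith

def Gm (K : Set E3) (w : P3 × ℝ) : ℝ := 2 * Ff K w - Ff K (w.1, π)

lemma Gm_contDiff (hK : IsKhat K) : ContDiff ℝ (⊤ : ℕ∞) (Gm K) := by
  have h1 : ContDiff ℝ (⊤ : ℕ∞) (fun w : P3 × ℝ => Ff K (w.1, π)) :=
    (Ff_contDiff hK).comp (contDiff_fst.prodMk contDiff_const)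
  exact ((contDiff_const.mul (Ff_contDiff hK)).sub h1 : )

lemma Gm_hasDeriv (hK : IsKhat K) (x : P3) (Θ₀ : ℝ) :
    HasDerivAt (fun Θ => Gm K (x, Θ)) (2 * gA K (x, Θ₀)) Θ₀ := by
  have h := ((Ff_hasDeriv hK x Θ₀).const_mul 2).sub_const (Ff K (x, π))
  exact h

def rootF (K : Set E3) (hK : IsKhat K) (x : P3) : ℝ :=
  (exists_unique_root hK x).exists.choose

lemma rootF_spec (hK : IsKhat K) (x : P3) :
    rootF K hK x ∈ Ioo 0 π ∧ 2 * Ff K (x, rootF K hK x) = Ff K (x, π) :=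
  (exists_unique_root hK x).exists.choose_spec

lemma rootF_unique (hK : IsKhat K) {x : P3} {Θ : ℝ}
    (h : Θ ∈ Ioo 0 π ∧ 2 * Ff K (x, Θ) = Ff K (x, π)) : Θ = rootF K hK x :=
  (exists_unique_root hK x).unique h (rootF_spec hK x)

lemma rootF_contDiffAt (hK : IsKhat K) (x₀ : P3) :
    ContDiffAt ℝ (⊤ : ℕ∞) (rootF K hK) x₀ := by
  classical
  set Θ₀ := rootF K hK x₀ with hΘ₀def
  obtain ⟨hΘ₀mem, hΘ₀val⟩ := rootF_spec hK x₀
  set Φm : P3 × ℝ → P3 × ℝ := fun w => (w.1, Gm K w) with hΦdef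
  have hGsm := Gm_contDiff hK
  set D : (P3 × ℝ) →L[ℝ] ℝ := fderiv ℝ (Gm K) (x₀, Θ₀) with hDdef
  have hD : HasFDerivAt (Gm K) D (x₀, Θ₀) :=
    (hGsm.differentiable (by simp) (x₀, Θ₀)).hasFDerivAt
  have hG2 : HasDerivAt (fun Θ => Gm K (x₀, Θ)) (D ((0 : P3), (1 : ℝ))) Θ₀ := by
    have hp : HasDerivAt (fun Θ : ℝ => ((x₀, Θ) : P3 × ℝ)) ((0 : P3), (1 : ℝ)) Θ₀ :=
      (hasDerivAt_const Θ₀ x₀).prodMk (hasDerivAt_id Θ₀)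
    exact hD.comp_hasDerivAt Θ₀ hp
  have hc : D ((0 : P3), (1 : ℝ)) = 2 * gA K (x₀, Θ₀) :=
    hG2.unique (Gm_hasDeriv hK x₀ Θ₀)
  set c : ℝ := D ((0 : P3), (1 : ℝ)) with hcdef
  have hcpos : 0 < c := by
    have h := gA_pos hK (x₀, Θ₀)
    calc (0:ℝ) < 2 * gA K (x₀, Θ₀) := by linarith
    _ = c := hc.symm
  have hcne : c ≠ 0 := ne_of_gt hcpos
  have hkey : ∀ (u : P3) (s : ℝ), D (u, s) = D (u, 0) + s * c := by
    intro u s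
    have h1 : ((u, s) : P3 × ℝ) = (u, (0 : ℝ)) + s • ((0 : P3), (1 : ℝ)) := by
      simp [Prod.ext_iff]
    rw [h1, map_add, _root_.map_smul, smul_eq_mul]
  set L₁ : (P3 × ℝ) →L[ℝ] (P3 × ℝ) := (ContinuousLinearMap.fst ℝ P3 ℝ).prod D with hL₁def
  set L₂ : (P3 × ℝ) →L[ℝ] (P3 × ℝ) := (ContinuousLinearMap.fst ℝ P3 ℝ).prod
      (c⁻¹ • ((ContinuousLinearMap.snd ℝ P3 ℝ) -
        D.comp ((ContinuousLinearMap.fst ℝ P3 ℝ).prod 0))) with hL₂def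
  have hL₁app : ∀ w : P3 × ℝ, L₁ w = (w.1, D w) := fun w => rfl
  have hL₂app : ∀ w : P3 × ℝ, L₂ w = (w.1, c⁻¹ * (w.2 - D (w.1, 0))) := fun w => rfl
  have hleft : Function.LeftInverse L₂ L₁ := by
    intro w
    rw [hL₁app, hL₂app]
    have h2 : D (w.1, w.2) = D (w.1, 0) + w.2 * c := hkey w.1 w.2
    have h3 : c⁻¹ * (D (w.1, w.2) - D (w.1, 0)) = w.2 := by
      rw [h2]; field_simp; ring
    have h4 : D w = D (w.1, w.2) := rfl
    simp only [h4, h3]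
  have hright : Function.RightInverse L₂ L₁ := by
    intro w
    rw [hL₂app, hL₁app]
    have h2 : D (w.1, c⁻¹ * (w.2 - D (w.1, 0)))
        = D (w.1, 0) + (c⁻¹ * (w.2 - D (w.1, 0))) * c := hkey _ _
    have h3 : D (w.1, 0) + (c⁻¹ * (w.2 - D (w.1, 0))) * c = w.2 := by field_simp; ring
    simp only [h2, h3]
  set e : (P3 × ℝ) ≃L[ℝ] (P3 × ℝ) := ContinuousLinearEquiv.equivOfInverse L₁ L₂ hleft hright
    with hedef
  have hΦsm : ContDiffAt ℝ (⊤ : ℕ∞) Φm (x₀, Θ₀) := (contDiff_fst.prodMk hGsm).contDiffAt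
  have hfder : HasFDerivAt Φm (e : (P3 × ℝ) →L[ℝ] (P3 × ℝ)) (x₀, Θ₀) := by
    have h1 : HasFDerivAt Φm L₁ (x₀, Θ₀) :=
      (ContinuousLinearMap.fst ℝ P3 ℝ).hasFDerivAt.prodMk hD
    exact h1
  have hn : ((⊤ : ℕ∞) : WithTop ℕ∞) ≠ 0 := by simp
  set ginv := hΦsm.localInverse hfder hn with hginvdef
  have hginvCD : ContDiffAt ℝ (⊤ : ℕ∞) ginv (Φm (x₀, Θ₀)) :=
    hΦsm.to_localInverse hfder hn
  have hΦa : Φm (x₀, Θ₀) = (x₀, 0) := by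
    have : Gm K (x₀, Θ₀) = 0 := by rw [Gm]; simpa using sub_eq_zero.2 hΘ₀val
    simp [hΦdef, this]
  have hga : ginv (Φm (x₀, Θ₀)) = (x₀, Θ₀) := hΦsm.localInverse_apply_image hfder hn
  have hrev : ∀ᶠ y in nhds (Φm (x₀, Θ₀)), Φm (ginv y) = y :=
    (hΦsm.hasStrictFDerivAt' hfder hn).eventually_right_inverse
  rw [hΦa] at hginvCD hga hrev
  set S : P3 → P3 × ℝ := fun x => ginv (x, 0) with hSdef
  have hScd : ContDiffAt ℝ (⊤ : ℕ∞) S x₀ :=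
    hginvCD.comp x₀ (contDiffAt_id.prodMk contDiffAt_const)
  have hS0 : S x₀ = (x₀, Θ₀) := hga
  have htend : Filter.Tendsto (fun x : P3 => ((x, (0 : ℝ)) : P3 × ℝ)) (nhds x₀)
      (nhds ((x₀, 0) : P3 × ℝ)) := by
    exact (Continuous.prodMk continuous_id continuous_const).continuousAt
  have hev1 : ∀ᶠ x in nhds x₀, Φm (S x) = (x, 0) := htend.eventually hrev
  have hsndcont : Filter.Tendsto (fun x : P3 => (S x).2) (nhds x₀) (nhds Θ₀) := by
    have h6 := hScd.continuousAt
    unfold ContinuousAt at h6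
    rw [hS0] at h6
    exact (continuous_snd.tendsto ((x₀, Θ₀) : P3 × ℝ)).comp h6
  have hev2 : ∀ᶠ x in nhds x₀, (S x).2 ∈ Ioo 0 π :=
    hsndcont (isOpen_Ioo.mem_nhds hΘ₀mem)
  have hroot_eq : (rootF K hK) =ᶠ[nhds x₀] fun x => (S x).2 := by
    filter_upwards [hev1, hev2] with x h1 h2
    have hfst : (S x).1 = x := congrArg Prod.fst h1
    have hsnd : Gm K (S x) = 0 := congrArg Prod.snd h1
    have h3 : Gm K ((S x).1, (S x).2) = 0 := by
      rw [Prod.mk.eta]; exact hsnd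
    rw [hfst] at h3
    have h4 : 2 * Ff K (x, (S x).2) = Ff K (x, π) := by
      simp only [Gm] at h3
      linarith
    exact ((rootF_unique hK ⟨h2, h4⟩).symm : rootF K hK x = (S x).2)
  exact (contDiffAt_snd.comp x₀ hScd).congr_of_eventuallyEq hroot_eq

lemma rotX_zero (p : E3) : rotX 0 p = p := by
  rw [rotX]
  simp only [Real.cos_zero, Real.sin_zero, one_mul, zero_mul, sub_zero, add_zero, zero_add]
  exact pt_eta p

lemma rotY_zero (p : E3) : rotY 0 p = p := by
  rw [rotY]
  simp only [Real.cos_zero, Real.sin_zero, one_mul, zero_mul, sub_zero, add_zero, zero_add,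
    neg_zero]
  exact pt_eta p

lemma rotZ_zero (p : E3) : rotZ 0 p = p := by
  rw [rotZ]
  simp only [Real.cos_zero, Real.sin_zero, one_mul, zero_mul, sub_zero, add_zero, zero_add]
  exact pt_eta p

lemma rotK_zero : rotK K ((0 : ℝ), (0 : ℝ), (0 : ℝ)) = K := by
  rw [rotK]
  simp only [show (((0:ℝ),(0:ℝ),(0:ℝ)) : P3).1 = (0:ℝ) from rfl]
  rw [show (fun p => rotX 0 p) '' _ = _ from rfl]
  have h1 : rotX (0:ℝ) = id := funext rotX_zero
  have h2 : rotY (0:ℝ) = id := funext rotY_zero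
  have h3 : rotZ (0:ℝ) = id := funext rotZ_zero
  rw [h1, h2, h3, Set.image_id, Set.image_id, Set.image_id]

end Core

/-- Lemma 5.2: for `K ∈ 𝒦̂` there is a unique `Θ(K) ∈ (0, π)` equalizing the two
`β`-integrals, and `(θ, φ, ψ) ↦ Θ(X(θ)Y(φ)Z(ψ)K)` is a `C^∞` function on `ℝ³`. -/
theorem theta_exists_unique_smooth (K : Set E3) (hK : IsKhat K) :
    (∃! Θ : ℝ, ThetaEq K Θ) ∧
      ∃ T : ℝ → ℝ → ℝ → ℝ,
        ContDiff ℝ (⊤ : ℕ∞) (fun p : ℝ × ℝ × ℝ => T p.1 p.2.1 p.2.2) ∧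
        ∀ θ φ ψ : ℝ, ThetaEq (rotX θ '' (rotY φ '' (rotZ ψ '' K))) (T θ φ ψ) := by
  constructor
  · -- uniqueness/existence for K itself
    have h0 : ∀ Θ : ℝ, ThetaEq K Θ ↔ ThetaEq (rotK K ((0:ℝ),(0:ℝ),(0:ℝ))) Θ := by
      intro Θ; rw [rotK_zero]
    refine ⟨rootF K hK ((0:ℝ),(0:ℝ),(0:ℝ)), ?_, ?_⟩
    · exact (h0 _).2 ((theta_iff hK _ _).2 (rootF_spec hK _))
    · intro y hy
      exact rootF_unique hK ((theta_iff hK _ _).1 ((h0 _).1 hy))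
  · refine ⟨fun θ φ ψ => rootF K hK (θ, φ, ψ), ?_, ?_⟩
    · exact contDiff_iff_contDiffAt.2 fun x => rootF_contDiffAt hK x
    · intro θ φ ψ
      exact (theta_iff hK (θ, φ, ψ) _).2 (rootF_spec hK (θ, φ, ψ))
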